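/- There exists a partition of [0,1] into countably many pairwise disjoint sets ⟨B_n : n ∈ ℕ⟩ such that each B_n has full Lebesgue outer measure, i.e. μ*(B_n) = 1 for every n. -/

import Mathlib

open MeasureTheory Set Function

lemma pairLI : LinearIndependent ℚ ((↑) : ({1, Real.sqrt 2} : Set ℝ) → ℝ) := by
  have h2 : Irrational (Real.sqrt 2) := irrational_sqrt_two
  have hli : LinearIndependent ℚ ![(1:ℝ), Real.sqrt 2] := by
    rw [LinearIndependent.pair_iff' one_ne_zero]
    intro a ha
    exact h2 ⟨a, by simpa [Rat.smul_one_eq_cast] using ha⟩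
  have hr : range ![(1:ℝ), Real.sqrt 2] = {1, Real.sqrt 2} := by
    rw [Matrix.range_cons, Matrix.range_cons_empty]; rfl
  have := (linearIndepOn_id_range_iff hli.injective).mpr hli
  rwa [hr] at this

lemma exists_functional : ∃ f : ℝ →ₗ[ℚ] ℚ, f 1 = 0 ∧ Function.Surjective f := by
  classical
  set s : Set ℝ := {1, Real.sqrt 2}
  have hs : LinearIndepOn ℚ id s := pairLI
  set B := Module.Basis.extend hs with hB
  have h1mem : (1:ℝ) ∈ hs.extend (subset_univ s) := hs.subset_extend _ (by simp [s])
  have h2mem : Real.sqrt 2 ∈ hs.extend (subset_univ s) := hs.subset_extend _ (by simp [s])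
  have hB1 : B ⟨1, h1mem⟩ = 1 := Module.Basis.extend_apply_self hs _
  have hB2 : B ⟨Real.sqrt 2, h2mem⟩ = Real.sqrt 2 := Module.Basis.extend_apply_self hs _
  have hne : (⟨1, h1mem⟩ : hs.extend (subset_univ s)) ≠ ⟨Real.sqrt 2, h2mem⟩ := by
    intro h
    have h' : (1:ℝ) = Real.sqrt 2 := congrArg Subtype.val h
    exact irrational_sqrt_two ⟨1, by rw [Rat.cast_one]; exact h'⟩
  have hr1 := B.repr_self ⟨1, h1mem⟩
  have hr2 := B.repr_self ⟨Real.sqrt 2, h2mem⟩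
  rw [hB1] at hr1
  rw [hB2] at hr2
  refine ⟨B.coord ⟨Real.sqrt 2, h2mem⟩, ?_, ?_⟩
  · rw [Module.Basis.coord_apply, hr1, Finsupp.single_apply, if_neg hne]
  · intro q
    refine ⟨q • Real.sqrt 2, ?_⟩
    rw [Module.Basis.coord_apply, _root_.map_smul, hr2]
    simp

open scoped Pointwise ENNReal

instance fact_zero_lt_one_real : Fact ((0:ℝ) < 1) := ⟨one_pos⟩

local notation "T1" => AddCircle (1:ℝ)

variable (f : ℝ →ₗ[ℚ] ℚ)

lemma f_rat (hf1 : f 1 = 0) (r : ℚ) : f (r:ℝ) = 0 := by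
  have : ((r:ℝ)) = r • (1:ℝ) := by rw [Rat.smul_def, mul_one]
  rw [this, LinearMap.map_smul, hf1, smul_zero]

/-- translating a coset -/
lemma coset_vadd (r : ℝ) (q : ℚ) :
    ((r : T1) +ᵥ (((↑·) : ℝ → T1) '' (f ⁻¹' {q}))) = ((↑·) : ℝ → T1) '' (f ⁻¹' {q + f r}) := by
  ext z
  constructor
  · rintro ⟨_, ⟨x, hx, rfl⟩, rfl⟩
    simp only [mem_preimage, Set.mem_singleton_iff] at hx
    exact ⟨r + x, by simp only [mem_preimage, Set.mem_singleton_iff, map_add, hx]; ring,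
      by show ((r + x : ℝ) : T1) = _; rw [AddCircle.coe_add]; rfl⟩
  · rintro ⟨y, hy, rfl⟩
    simp only [mem_preimage, Set.mem_singleton_iff] at hy
    refine ⟨((y - r : ℝ) : T1), ⟨y - r, ?_, rfl⟩, ?_⟩
    · simp only [mem_preimage, Set.mem_singleton_iff, map_sub, hy]; ring
    · show ((r:T1) + _) = _
      rw [← AddCircle.coe_add]
      norm_num

lemma coset_null_or_one (hf1 : f 1 = 0) (q : ℚ) :
    volume (((↑·) : ℝ → T1) '' (f ⁻¹' {q})) = 0 ∨
    volume (((↑·) : ℝ → T1) '' (f ⁻¹' {q})) = 1 := by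
  set C : Set T1 := ((↑·) : ℝ → T1) '' (f ⁻¹' {q}) with hC
  set E := toMeasurable volume C with hE
  have hEm : MeasurableSet E := measurableSet_toMeasurable _ _
  have hCE : C ⊆ E := subset_toMeasurable _ _
  have hCEeq : volume C = volume E := (measure_toMeasurable _).symm
  have hinv : ∀ r : ℚ, (((r:ℝ) : T1) +ᵥ E : Set T1) =ᵐ[volume] E := by
    intro r
    set g : T1 := ((r:ℝ) : T1)
    have hvC : g +ᵥ C = C := by
      rw [hC, coset_vadd f, f_rat f hf1, add_zero]
    set F : Set T1 := E ∩ (g +ᵥ E) with hF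
    have hsubset : C ⊆ F := by
      intro z hz
      refine ⟨hCE hz, ?_⟩
      rw [← hvC] at hz
      obtain ⟨y, hy, rfl⟩ := hz
      exact ⟨y, hCE hy, rfl⟩
    have hFm : MeasurableSet F := hEm.inter (hEm.const_vadd g)
    have hle : volume E ≤ volume F := by
      rw [← hCEeq]; exact measure_mono hsubset
    have hFE : volume F = volume E :=
      le_antisymm (measure_mono inter_subset_left) hle
    have hne : volume F ≠ ⊤ := by rw [hFE]; exact measure_ne_top _ _
    have d1 : volume (E \ F) = 0 := by
      rw [measure_diff inter_subset_left hFm.nullMeasurableSet hne, hFE, tsub_self]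
    have d2 : volume ((g +ᵥ E) \ F) = 0 := by
      rw [measure_diff inter_subset_right hFm.nullMeasurableSet hne, hFE,
        measure_vadd, tsub_self]
    rw [← measure_symmDiff_eq_zero_iff]
    refine measure_mono_null ?_ (measure_union_null d2 d1)
    rw [symmDiff_def]
    exact sup_le_sup (diff_subset_diff_right inter_subset_left)
      (diff_subset_diff_right inter_subset_right)
  have hdense : Dense {g : T1 | (g +ᵥ ·) ⁻¹' E =ᵐ[volume] E} := by
    have h1 : DenseRange ((↑) : ℚ → ℝ) := Rat.denseRange_cast
    have h2 : DenseRange ((↑·) : ℝ → T1) :=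
      (QuotientAddGroup.mk'_surjective _).denseRange
    have hd : DenseRange (fun r : ℚ => ((r:ℝ) : T1)) :=
      h2.comp h1 (AddCircle.continuous_mk' 1)
    refine hd.mono ?_
    rintro _ ⟨r, rfl⟩
    show ((((r:ℝ)) : T1) +ᵥ ·) ⁻¹' E =ᵐ[volume] E
    have hpre : ((((r:ℝ)) : T1) +ᵥ ·) ⁻¹' E = (-(((r:ℝ)) : T1)) +ᵥ E := by
      ext x
      simp only [mem_preimage, Set.mem_vadd_set_iff_neg_vadd_mem, neg_neg]
    rw [hpre]
    simpa using hinv (-r)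
  have haec : Filter.EventuallyConst E (ae volume) :=
    aeconst_of_dense_setOf_preimage_vadd_ae hEm.nullMeasurableSet hdense
  rcases Filter.eventuallyConst_set'.mp haec with h | h
  · left; rw [hCEeq]; exact ae_eq_empty.mp h
  · right
    rw [hCEeq, measure_congr h, AddCircle.measure_univ, ENNReal.ofReal_one]

lemma coset_one (hf1 : f 1 = 0) (hfs : Function.Surjective f) (q : ℚ) :
    volume (((↑·) : ℝ → T1) '' (f ⁻¹' {q})) = 1 := by
  have heq : ∀ q q' : ℚ, volume (((↑·) : ℝ → T1) '' (f ⁻¹' {q}))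
      = volume (((↑·) : ℝ → T1) '' (f ⁻¹' {q'})) := by
    intro q q'
    obtain ⟨r, hr⟩ := hfs (q' - q)
    have h := coset_vadd f r q
    rw [hr, add_sub_cancel] at h
    rw [← h, measure_vadd]
  rcases coset_null_or_one f hf1 q with h | h
  · exfalso
    have hcover : (univ : Set T1) = ⋃ q' : ℚ, ((↑·) : ℝ → T1) '' (f ⁻¹' {q'}) := by
      ext z
      simp only [mem_univ, true_iff, mem_iUnion]
      obtain ⟨x, rfl⟩ := QuotientAddGroup.mk'_surjective _ z
      exact ⟨f x, x, rfl, rfl⟩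
    have h0 : volume (univ : Set T1) = 0 := by
      rw [hcover]
      exact measure_iUnion_null fun q' => by rw [← heq q q']; exact h
    rw [AddCircle.measure_univ, ENNReal.ofReal_one] at h0
    exact one_ne_zero h0
  · exact h

lemma trace_one (hf1 : f 1 = 0) (hfs : Function.Surjective f) (q : ℚ) :
    volume (f ⁻¹' {q} ∩ Ioc (0:ℝ) 1) = 1 := by
  have h01 : (0:ℝ) + 1 = 1 := zero_add 1
  set s : Set ℝ := f ⁻¹' {q} with hs
  have hub : volume (s ∩ Ioc (0:ℝ) 1) ≤ 1 := by
    calc volume (s ∩ Ioc (0:ℝ) 1) ≤ volume (Ioc (0:ℝ) 1) := measure_mono inter_subset_right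
    _ = 1 := by rw [Real.volume_Ioc]; norm_num
  set t : Set ℝ := toMeasurable volume (s ∩ Ioc 0 1) ∩ Ioc 0 1 with ht
  have htm : MeasurableSet t := (measurableSet_toMeasurable _ _).inter measurableSet_Ioc
  have hsub : s ∩ Ioc 0 1 ⊆ t := subset_inter (subset_toMeasurable _ _) inter_subset_right
  have htI : t ⊆ Ioc 0 1 := inter_subset_right
  have htle : volume t ≤ volume (s ∩ Ioc 0 1) :=
    le_trans (measure_mono inter_subset_left) (measure_toMeasurable _).le
  refine le_antisymm hub (le_trans ?_ htle)
  -- 1 ≤ volume t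
  have hmk : ∀ (x : ℝ) (hx : x ∈ Ioc (0:ℝ) (0+1)),
      ((x : T1)) = (AddCircle.equivIoc 1 0).symm ⟨x, hx⟩ := fun x hx => rfl
  have hinj : ∀ x ∈ Ioc (0:ℝ) (0+1), ∀ y ∈ Ioc (0:ℝ) (0+1), ((x:T1) = (y:T1)) → x = y := by
    intro x hx y hy hxy
    rw [hmk x hx, hmk y hy] at hxy
    exact congrArg Subtype.val ((AddCircle.equivIoc 1 0).symm.injective hxy)
  set e := AddCircle.measurableEquivIoc 1 0 with he
  have hesymm : ∀ z : T1, ((((e z : Ioc (0:ℝ) (0+1))) : ℝ) : T1) = z := by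
    intro z
    rw [hmk _ (e z).2]
    exact (AddCircle.equivIoc 1 0).symm_apply_apply z
  set D : Set T1 := ((↑·) : ℝ → T1) '' t with hD
  have hDeq : D = ⇑e ⁻¹' (Subtype.val ⁻¹' t) := by
    ext z
    constructor
    · rintro ⟨x, hx, rfl⟩
      have hxI : x ∈ Ioc (0:ℝ) (0+1) := by rw [h01]; exact htI hx
      have : e ((x : T1)) = ⟨x, hxI⟩ := by
        rw [hmk x hxI]
        show (AddCircle.equivIoc 1 0) ((AddCircle.equivIoc 1 0).symm _) = _
        exact (AddCircle.equivIoc 1 0).apply_symm_apply _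
      simp only [mem_preimage, this]
      exact hx
    · intro hz
      exact ⟨(e z : Ioc (0:ℝ) (0+1)), hz, hesymm z⟩
  have hDm : MeasurableSet D := by
    rw [hDeq]
    exact (htm.preimage measurable_subtype_coe).preimage e.measurable
  have hCD : (((↑·) : ℝ → T1) '' s) ⊆ D := by
    rintro _ ⟨x, hx, rfl⟩
    set y : ℝ := ((e ((x:T1)) : Ioc (0:ℝ) (0+1)) : ℝ) with hy
    have hyI : y ∈ Ioc (0:ℝ) (0+1) := (e ((x:T1))).2
    have hyx : ((y : T1)) = ((x : T1)) := hesymm _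
    have hyf : f y = q := by
      have hmem : y - x ∈ AddSubgroup.zmultiples (1:ℝ) :=
        (QuotientAddGroup.eq_iff_sub_mem).mp hyx
      obtain ⟨n, hn⟩ := AddSubgroup.mem_zmultiples_iff.mp hmem
      have hfx : f x = q := hx
      have h0 : f (y - x) = 0 := by
        rw [← hn]
        have hcast : (n • (1:ℝ)) = (((n:ℚ):ℝ)) := by rw [zsmul_eq_mul, mul_one]; push_cast; ring
        rw [hcast]
        exact f_rat f hf1 _
      calc f y = f ((y - x) + x) := by congr 1; ring
      _ = f (y - x) + f x := map_add f _ _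
      _ = 0 + q := by rw [h0, hfx]
      _ = q := zero_add q
    refine ⟨y, hsub ⟨hyf, by rwa [h01] at hyI⟩, hyx⟩
  have hmD : volume D = volume t := by
    rw [AddCircle.add_projection_respects_measure (T := 1) 0 hDm]
    congr 1
    ext x
    constructor
    · rintro ⟨hxD, hxI⟩
      obtain ⟨y, hyt, hyx⟩ := hxD
      rwa [← hinj y (by rw [h01] at *; exact htI hyt) x hxI hyx]
    · intro hx
      exact ⟨⟨x, hx, rfl⟩, by rw [h01]; exact htI hx⟩
  calc (1:ℝ≥0∞) = volume (((↑·) : ℝ → T1) '' s) := (coset_one f hf1 hfs q).symm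
  _ ≤ volume D := measure_mono hCD
  _ = volume t := hmD

lemma trace_Icc_one (hf1 : f 1 = 0) (hfs : Function.Surjective f) (q : ℚ) :
    volume (f ⁻¹' {q} ∩ Icc (0:ℝ) 1) = 1 := by
  refine le_antisymm ?_ ?_
  · calc volume (f ⁻¹' {q} ∩ Icc (0:ℝ) 1) ≤ volume (Icc (0:ℝ) 1) :=
      measure_mono inter_subset_right
    _ = 1 := by rw [Real.volume_Icc]; norm_num
  · calc (1:ℝ≥0∞) = volume (f ⁻¹' {q} ∩ Ioc (0:ℝ) 1) := (trace_one f hf1 hfs q).symm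
    _ ≤ volume (f ⁻¹' {q} ∩ Icc (0:ℝ) 1) :=
      measure_mono (inter_subset_inter_right _ Ioc_subset_Icc_self)

/-- There is a partition of `[0,1]` into countably many pairwise disjoint
nonempty sets, each of full Lebesgue outer measure. -/
theorem stmt1 :
    ∃ B : ℕ → Set ℝ,
      (∀ n, (B n).Nonempty) ∧
      Pairwise (Function.onFun Disjoint B) ∧
      (⋃ n, B n) = Set.Icc (0:ℝ) 1 ∧
      (∀ n, volume (B n) = 1) := by
  obtain ⟨f, hf1, hfs⟩ := exists_functional
  let en : ℕ ≃ ℚ := (Denumerable.eqv ℚ).symm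
  refine ⟨fun n => f ⁻¹' {en n} ∩ Icc 0 1, ?_, ?_, ?_, ?_⟩
  · intro n
    obtain ⟨x₀, hx₀⟩ := hfs (en n)
    have hd : DenseRange (fun r : ℚ => x₀ + (r:ℝ)) :=
      ((Homeomorph.addLeft x₀).surjective.denseRange).comp Rat.denseRange_cast
        (Homeomorph.continuous _)
    obtain ⟨r, hmem⟩ := hd.exists_mem_open isOpen_Ioo
      (⟨(1:ℝ)/2, by norm_num⟩ : (Ioo (0:ℝ) 1).Nonempty)
    refine ⟨x₀ + (r:ℝ), ?_, Ioo_subset_Icc_self hmem⟩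
    simp only [mem_preimage, Set.mem_singleton_iff, map_add, hx₀, f_rat f hf1 r, add_zero]
  · intro m n hmn
    have h : en m ≠ en n := fun h => hmn (en.injective h)
    rw [Function.onFun]
    rw [Set.disjoint_left]
    rintro x ⟨hx1, -⟩ ⟨hx2, -⟩
    rw [mem_preimage, Set.mem_singleton_iff] at hx1 hx2
    exact h (hx1 ▸ hx2 ▸ rfl)
  · apply subset_antisymm
    · exact iUnion_subset fun n => inter_subset_right
    · intro x hx
      exact mem_iUnion.mpr ⟨en.symm (f x), ⟨by simp, hx⟩⟩
  · intro n
    exact trace_Icc_one f hf1 hfs (en n)
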